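/- Suppose B(1,1) ≤ B̄, let k* ∈ {1,…,K−1} satisfy B(k*,1) ≤ B̄ < B(k*+1,1), let x* ∈ [c_{k*}/c_{k*+1}, 1] satisfy B(k*, x*) = B̄, and assume R(k*, x*) ≥ 1. Define q ∈ [0,1]^K by q_t = (c_t/c_{k*})·x* for t ≤ k* and q_t = 1 for t > k*, and define A by A_t = 1/R(k*, x*) for t ≤ k* and A_t = (B̄/√c_t)·√(c_{k*}/x*)/Q(k*, x*) for t > k*. Then A is a monotone non-increasing budget-feasible allocation rule with Σ_{t=1}^K π_t·c_t·A_t = B̄, and (A, q) is an equilibrium pair. -/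

import Mathlib

set_option maxHeartbeats 1000000


/-- Case 1, `R(k*,x*) ≥ 1`: the allocation rule equal to `1/R(k*,x*)`
below `k*` and to `(B̄/√c_t)·√(c_{k*}/x*)/Q(k*,x*)` above `k*`, together with
`q_t = (c_t/c_{k*}) x*` below `k*` and `q_t = 1` above, is a monotone non-increasing
budget-feasible allocation rule spending exactly `B̄`, and `(A, q)` is an equilibrium
pair of the variance zero-sum game. Costs are indexed by `{1, …, K}`. -/
theorem equilibrium_case_R_ge_one
    (K : ℕ) (hK : 2 ≤ K) (c π : ℕ → ℝ) (Q R B : ℕ → ℝ → ℝ) (Bbar : ℝ)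
    (hc : ∀ t ∈ Finset.Icc 1 K, 0 < c t)
    (hcmono : ∀ j ∈ Finset.Icc 1 (K - 1), c j < c (j + 1))
    (hπpos : ∀ t ∈ Finset.Icc 1 K, 0 < π t)
    (hπsum : ∑ t ∈ Finset.Icc 1 K, π t = 1)
    (hBbar_pos : 0 < Bbar)
    (hQ : ∀ k ∈ Finset.Icc 1 K, ∀ x ∈ Set.Ioc (0 : ℝ) 1,
      Q k x = (∑ t ∈ Finset.Icc 1 k, π t * c t)
        + ∑ t ∈ Finset.Icc (k + 1) K, π t * Real.sqrt (c t * c k / x))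
    (hR : ∀ k ∈ Finset.Icc 1 K, ∀ x ∈ Set.Ioc (0 : ℝ) 1,
      R k x = 2 * ((∑ t ∈ Finset.Icc 1 k, π t * c t * x / c k)
        + ∑ t ∈ Finset.Icc (k + 1) K, π t))
    (hB : ∀ k ∈ Finset.Icc 1 K, ∀ x ∈ Set.Ioc (0 : ℝ) 1,
      B k x = Q k x / R k x)
    (hBbar_lb : B 1 1 ≤ Bbar)
    (kstar : ℕ) (hkstar : kstar ∈ Finset.Icc 1 (K - 1))
    (hkstar_lb : B kstar 1 ≤ Bbar) (hkstar_ub : Bbar < B (kstar + 1) 1)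
    (xstar : ℝ) (hxstar_lb : c kstar / c (kstar + 1) ≤ xstar) (hxstar_ub : xstar ≤ 1)
    (hxstar_eq : B kstar xstar = Bbar)
    (hRge : 1 ≤ R kstar xstar)
    (q A : ℕ → ℝ)
    (hq_low : ∀ t, t ≤ kstar → q t = (c t / c kstar) * xstar)
    (hq_high : ∀ t, kstar < t → q t = 1)
    (hA_low : ∀ t, t ≤ kstar → A t = 1 / R kstar xstar)
    (hA_high : ∀ t, kstar < t →
      A t = (Bbar / Real.sqrt (c t)) * Real.sqrt (c kstar / xstar) / Q kstar xstar) :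
    (∀ t ∈ Finset.Icc 1 K, 0 < A t ∧ A t ≤ 1) ∧
    (∀ s ∈ Finset.Icc 1 K, ∀ t ∈ Finset.Icc 1 K, s ≤ t → A t ≤ A s) ∧
    (∑ t ∈ Finset.Icc 1 K, π t * c t * A t = Bbar) ∧
    (∀ t ∈ Finset.Icc 1 K, q t ∈ Set.Icc (0 : ℝ) 1) ∧
    (∀ A' : ℕ → ℝ, (∀ t ∈ Finset.Icc 1 K, 0 < A' t ∧ A' t ≤ 1) →
      (∑ t ∈ Finset.Icc 1 K, π t * c t * A' t ≤ Bbar) →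
      (∑ t ∈ Finset.Icc 1 K, π t * q t / A t) - (∑ t ∈ Finset.Icc 1 K, π t * q t) ^ 2
        ≤ (∑ t ∈ Finset.Icc 1 K, π t * q t / A' t)
          - (∑ t ∈ Finset.Icc 1 K, π t * q t) ^ 2) ∧
    (∀ q' : ℕ → ℝ, (∀ t ∈ Finset.Icc 1 K, q' t ∈ Set.Icc (0 : ℝ) 1) →
      (∑ t ∈ Finset.Icc 1 K, π t * q' t / A t) - (∑ t ∈ Finset.Icc 1 K, π t * q' t) ^ 2
        ≤ (∑ t ∈ Finset.Icc 1 K, π t * q t / A t)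
          - (∑ t ∈ Finset.Icc 1 K, π t * q t) ^ 2) := by

  obtain ⟨hk1, hkK1⟩ := Finset.mem_Icc.mp hkstar
  have hkK : kstar ≤ K := by omega
  have hk1K : kstar + 1 ≤ K := by omega
  have hkmem : kstar ∈ Finset.Icc 1 K := Finset.mem_Icc.mpr ⟨hk1, hkK⟩
  have hck : 0 < c kstar := hc kstar hkmem
  have hck1 : 0 < c (kstar + 1) := hc (kstar + 1) (Finset.mem_Icc.mpr ⟨by omega, hk1K⟩)
  have cmono : ∀ s t : ℕ, 1 ≤ s → s ≤ t → t ≤ K → c s ≤ c t := by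
    intro s t hs hst htK
    induction t with
    | zero => omega
    | succ n ih =>
      rcases Nat.lt_or_ge s (n + 1) with h | h
      · have h1 : c s ≤ c n := ih (by omega) (by omega)
        have h2 : c n < c (n + 1) := hcmono n (Finset.mem_Icc.mpr ⟨by omega, by omega⟩)
        linarith
      · have hsn : s = n + 1 := by omega
        simp [hsn]
  have hx0 : 0 < xstar := lt_of_lt_of_le (div_pos hck hck1) hxstar_lb
  have hxmem : xstar ∈ Set.Ioc (0 : ℝ) 1 := ⟨hx0, hxstar_ub⟩
  have hQx := hQ kstar hkmem xstar hxmem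
  have hRx := hR kstar hkmem xstar hxmem
  have hBx := hB kstar hkmem xstar hxmem
  have hsub : Finset.Icc 1 kstar ⊆ Finset.Icc 1 K := Finset.Icc_subset_Icc_right hkK
  have hsub2 : Finset.Icc (kstar + 1) K ⊆ Finset.Icc 1 K := Finset.Icc_subset_Icc_left (by omega)
  have hne : (1 : ℕ) ∈ Finset.Icc 1 kstar := Finset.mem_Icc.mpr ⟨le_refl 1, hk1⟩
  have hRpos : 0 < R kstar xstar := by
    rw [hRx]
    have h1 : 0 < ∑ t ∈ Finset.Icc 1 kstar, π t * c t * xstar / c kstar :=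
      Finset.sum_pos (fun t ht => by
        have h1 := hπpos t (hsub ht); have h2 := hc t (hsub ht); positivity) ⟨1, hne⟩
    have h2 : 0 ≤ ∑ t ∈ Finset.Icc (kstar + 1) K, π t :=
      Finset.sum_nonneg fun t ht => (hπpos t (hsub2 ht)).le
    linarith
  have hQpos : 0 < Q kstar xstar := by
    rw [hQx]
    have h1 : 0 < ∑ t ∈ Finset.Icc 1 kstar, π t * c t :=
      Finset.sum_pos (fun t ht => mul_pos (hπpos t (hsub ht)) (hc t (hsub ht))) ⟨1, hne⟩
    have h2 : 0 ≤ ∑ t ∈ Finset.Icc (kstar + 1) K, π t * Real.sqrt (c t * c kstar / xstar) :=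
      Finset.sum_nonneg fun t ht => mul_nonneg (hπpos t (hsub2 ht)).le (Real.sqrt_nonneg _)
    linarith
  have hBbar_eq : Bbar = Q kstar xstar / R kstar xstar := by rw [← hxstar_eq, hBx]
  have hckx : c kstar / xstar ≤ c (kstar + 1) := by
    rw [div_le_iff₀ hx0]
    have h1 := (div_le_iff₀ hck1).mp hxstar_lb
    nlinarith
  have hckx0 : 0 < c kstar / xstar := div_pos hck hx0
  have hA_high' : ∀ t, kstar < t → t ≤ K →
      A t = Real.sqrt (c kstar / xstar) / (R kstar xstar * Real.sqrt (c t)) := by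
    intro t hkt htK
    have hct : 0 < c t := hc t (Finset.mem_Icc.mpr ⟨by omega, htK⟩)
    have hst : 0 < Real.sqrt (c t) := Real.sqrt_pos.mpr hct
    rw [hA_high t hkt, hBbar_eq]
    field_simp [hQpos.ne', hRpos.ne', hst.ne']
  have hA_bound : ∀ t ∈ Finset.Icc 1 K, 0 < A t ∧ A t * R kstar xstar ≤ 1 := by
    intro t ht
    obtain ⟨ht1, htK⟩ := Finset.mem_Icc.mp ht
    rcases le_or_gt t kstar with h | h
    · rw [hA_low t h]
      refine ⟨by positivity, le_of_eq (one_div_mul_cancel hRpos.ne')⟩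
    · have hct : 0 < c t := hc t ht
      have hst : 0 < Real.sqrt (c t) := Real.sqrt_pos.mpr hct
      have hle : c kstar / xstar ≤ c t :=
        le_trans hckx (cmono (kstar + 1) t (by omega) (by omega) htK)
      have hsle : Real.sqrt (c kstar / xstar) ≤ Real.sqrt (c t) := Real.sqrt_le_sqrt hle
      rw [hA_high' t h htK]
      constructor
      · positivity
      · rw [div_mul_eq_mul_div, div_le_one (by positivity)]
        nlinarith [mul_le_mul_of_nonneg_right hsle hRpos.le]
  have item1 : ∀ t ∈ Finset.Icc 1 K, 0 < A t ∧ A t ≤ 1 := by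
    intro t ht
    obtain ⟨h1, h2⟩ := hA_bound t ht
    refine ⟨h1, ?_⟩
    nlinarith [mul_le_mul_of_nonneg_left hRge h1.le]
  have item2 : ∀ s ∈ Finset.Icc 1 K, ∀ t ∈ Finset.Icc 1 K, s ≤ t → A t ≤ A s := by
    intro s hs t ht hst
    obtain ⟨hs1, hsK⟩ := Finset.mem_Icc.mp hs
    obtain ⟨ht1, htK⟩ := Finset.mem_Icc.mp ht
    rcases le_or_gt t kstar with h | h
    · rw [hA_low t h, hA_low s (by omega)]
    · rcases le_or_gt s kstar with h' | h'
      · rw [hA_low s h', le_div_iff₀ hRpos]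
        exact (hA_bound t ht).2
      · rw [hA_high' t h htK, hA_high' s h' hsK]
        have hcs : 0 < c s := hc s hs
        have hcst : c s ≤ c t := cmono s t hs1 hst htK
        have hss : 0 < Real.sqrt (c s) := Real.sqrt_pos.mpr hcs
        have hstt : 0 < Real.sqrt (c t) := Real.sqrt_pos.mpr (hc t ht)
        rw [div_le_div_iff₀ (mul_pos hRpos hstt) (mul_pos hRpos hss)]
        exact mul_le_mul_of_nonneg_left
          (mul_le_mul_of_nonneg_left (Real.sqrt_le_sqrt hcst) hRpos.le) (Real.sqrt_nonneg _)
  have hsplit : ∀ f : ℕ → ℝ, ∑ t ∈ Finset.Icc 1 K, f t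
      = (∑ t ∈ Finset.Icc 1 kstar, f t) + ∑ t ∈ Finset.Icc (kstar + 1) K, f t := by
    intro f
    have hu : Finset.Icc 1 K = Finset.Icc 1 kstar ∪ Finset.Icc (kstar + 1) K := by
      ext a; simp only [Finset.mem_union, Finset.mem_Icc]; omega
    have hd : Disjoint (Finset.Icc 1 kstar) (Finset.Icc (kstar + 1) K) := by
      rw [Finset.disjoint_left]
      intro a ha hb
      simp only [Finset.mem_Icc] at ha hb
      omega
    rw [hu, Finset.sum_union hd]
  have hbudget : ∑ t ∈ Finset.Icc 1 K, π t * c t * A t = Bbar := by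
    rw [hsplit]
    have e1 : ∑ t ∈ Finset.Icc 1 kstar, π t * c t * A t
        = (∑ t ∈ Finset.Icc 1 kstar, π t * c t) / R kstar xstar := by
      rw [Finset.sum_div]
      refine Finset.sum_congr rfl fun t ht => ?_
      rw [hA_low t (Finset.mem_Icc.mp ht).2]
      ring
    have e2 : ∑ t ∈ Finset.Icc (kstar + 1) K, π t * c t * A t
        = (∑ t ∈ Finset.Icc (kstar + 1) K, π t * Real.sqrt (c t * c kstar / xstar))
          / R kstar xstar := by
      rw [Finset.sum_div]
      refine Finset.sum_congr rfl fun t ht => ?_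
      obtain ⟨ht1, htK⟩ := Finset.mem_Icc.mp ht
      have hct : 0 < c t := hc t (hsub2 ht)
      have hst : 0 < Real.sqrt (c t) := Real.sqrt_pos.mpr hct
      have h1 : Real.sqrt (c t) * Real.sqrt (c t) = c t := Real.mul_self_sqrt hct.le
      rw [hA_high' t (by omega) htK, mul_div_assoc (c t), Real.sqrt_mul hct.le]
      set r := Real.sqrt (c t) with hr
      rw [← h1]
      field_simp [hst.ne', hRpos.ne']
    rw [e1, e2, hBbar_eq, hQx]
    ring
  have h2S : 2 * ∑ t ∈ Finset.Icc 1 K, π t * q t = R kstar xstar := by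
    rw [hsplit, hRx]
    have e1 : ∑ t ∈ Finset.Icc 1 kstar, π t * q t
        = ∑ t ∈ Finset.Icc 1 kstar, π t * c t * xstar / c kstar :=
      Finset.sum_congr rfl fun t ht => by
        rw [hq_low t (Finset.mem_Icc.mp ht).2]; ring
    have e2 : ∑ t ∈ Finset.Icc (kstar + 1) K, π t * q t
        = ∑ t ∈ Finset.Icc (kstar + 1) K, π t :=
      Finset.sum_congr rfl fun t ht => by
        obtain ⟨ht1, _⟩ := Finset.mem_Icc.mp ht
        rw [hq_high t (by omega)]; ring
    rw [e1, e2]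
  have item4 : ∀ t ∈ Finset.Icc 1 K, q t ∈ Set.Icc (0 : ℝ) 1 := by
    intro t ht
    obtain ⟨ht1, htK⟩ := Finset.mem_Icc.mp ht
    rcases le_or_gt t kstar with h | h
    · rw [Set.mem_Icc, hq_low t h]
      have hct : 0 < c t := hc t ht
      have hctk : c t ≤ c kstar := cmono t kstar ht1 h hkK
      have h1 : c t / c kstar ≤ 1 := (div_le_one hck).mpr hctk
      have h0 : 0 ≤ c t / c kstar := by positivity
      constructor
      · positivity
      · nlinarith
    · rw [hq_high t h]
      exact ⟨zero_le_one, le_refl 1⟩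
  set lam : ℝ := (R kstar xstar) ^ 2 * xstar / c kstar with hlam
  have hlampos : 0 < lam := by
    rw [hlam]; positivity
  have hq_id : ∀ t ∈ Finset.Icc 1 K, q t = lam * c t * (A t) ^ 2 := by
    intro t ht
    obtain ⟨ht1, htK⟩ := Finset.mem_Icc.mp ht
    have hct : 0 < c t := hc t ht
    rcases le_or_gt t kstar with h | h
    · rw [hq_low t h, hA_low t h, hlam]
      field_simp [hck.ne', hRpos.ne']
    · rw [hq_high t h, hA_high' t h htK, hlam]
      have hst : 0 < Real.sqrt (c t) := Real.sqrt_pos.mpr hct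
      have h1 : Real.sqrt (c t) ^ 2 = c t := Real.sq_sqrt hct.le
      have h2 : Real.sqrt (c kstar / xstar) ^ 2 = c kstar / xstar := Real.sq_sqrt hckx0.le
      rw [div_pow, mul_pow, h1, h2]
      field_simp [hck.ne', hRpos.ne', hct.ne', hx0.ne']
  have item5 : ∀ A' : ℕ → ℝ, (∀ t ∈ Finset.Icc 1 K, 0 < A' t ∧ A' t ≤ 1) →
      (∑ t ∈ Finset.Icc 1 K, π t * c t * A' t ≤ Bbar) →
      (∑ t ∈ Finset.Icc 1 K, π t * q t / A t) ≤ ∑ t ∈ Finset.Icc 1 K, π t * q t / A' t := by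
    intro A' hA' hbud
    have key : ∀ t ∈ Finset.Icc 1 K,
        π t * q t / A t + lam * (π t * c t * A t)
          ≤ π t * q t / A' t + lam * (π t * c t * A' t) := by
      intro t ht
      have hπt : 0 < π t := hπpos t ht
      have hct : 0 < c t := hc t ht
      have hAt : 0 < A t := (hA_bound t ht).1
      have hA't : 0 < A' t := (hA' t ht).1
      have hkey : π t * q t / A' t + lam * (π t * c t * A' t)
          - (π t * q t / A t + lam * (π t * c t * A t))
          = lam * (π t * c t) * (A' t - A t) ^ 2 / A' t := by
        rw [hq_id t ht]
        field_simp [hAt.ne', hA't.ne']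
        ring
      have hnn : 0 ≤ lam * (π t * c t) * (A' t - A t) ^ 2 / A' t := by positivity
      linarith
    have hsum := Finset.sum_le_sum key
    rw [Finset.sum_add_distrib, Finset.sum_add_distrib, ← Finset.mul_sum, ← Finset.mul_sum,
      hbudget] at hsum
    have hb2 : lam * (∑ t ∈ Finset.Icc 1 K, π t * c t * A' t) ≤ lam * Bbar :=
      mul_le_mul_of_nonneg_left hbud hlampos.le
    linarith
  refine ⟨item1, item2, hbudget, item4, ?_, ?_⟩
  · intro A' h1 h2
    have := item5 A' h1 h2
    linarith
  · intro q' hq'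
    have key6 : ∀ t ∈ Finset.Icc 1 K,
        π t * q' t / A t - π t * q t / A t
          ≤ R kstar xstar * (π t * q' t - π t * q t) := by
      intro t ht
      have hπt : 0 < π t := hπpos t ht
      obtain ⟨hAt, hAR⟩ := hA_bound t ht
      rcases le_or_gt t kstar with h | h
      · rw [hA_low t h]
        refine le_of_eq ?_
        field_simp [hRpos.ne']
      · have hq'le : q' t ≤ 1 := (hq' t ht).2
        have h1A : R kstar xstar ≤ 1 / A t := by
          rw [le_div_iff₀ hAt]
          nlinarith
        have hc0 : π t * (q' t - 1) ≤ 0 := by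
          nlinarith [mul_nonneg hπt.le (sub_nonneg.mpr hq'le)]
        calc π t * q' t / A t - π t * q t / A t
            = (π t * (q' t - 1)) * (1 / A t) := by rw [hq_high t h]; ring
          _ ≤ (π t * (q' t - 1)) * (R kstar xstar) := mul_le_mul_of_nonpos_left h1A hc0
          _ = R kstar xstar * (π t * q' t - π t * q t) := by rw [hq_high t h]; ring
    have hsum := Finset.sum_le_sum key6
    rw [Finset.sum_sub_distrib, ← Finset.mul_sum, Finset.sum_sub_distrib] at hsum
    have hRw : R kstar xstar
          * ((∑ t ∈ Finset.Icc 1 K, π t * q' t) - ∑ t ∈ Finset.Icc 1 K, π t * q t)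
        = 2 * (∑ t ∈ Finset.Icc 1 K, π t * q t)
          * ((∑ t ∈ Finset.Icc 1 K, π t * q' t) - ∑ t ∈ Finset.Icc 1 K, π t * q t) := by
      rw [← h2S]
    nlinarith [hsum, hRw,
      sq_nonneg ((∑ t ∈ Finset.Icc 1 K, π t * q' t) - ∑ t ∈ Finset.Icc 1 K, π t * q t)]
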